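/- Let x = (θ1,θ2,κ0,κ1,κ∞,p1,p2,q1,q2) be a (T2,T3) Garnier lattice with p1(l,m) ≠ 0 for all (l,m) ∈ ℤ². Let s1, w, β ∈ ℂ∖{0} with s1² = t1 and w² = t1−t2, and set α = w·β/s1. Then u(l,m) = −( t2·p2(l,m)/p1(l,m) − t1 )/(s1·w) satisfies the lattice sine-Gordon equation in product form with parameters α, β. -/

import Mathlib

/-- The data of the Garnier system in two variables at one lattice site:
parameters `th1, th2, k0, k1, kinf` (i.e. θ₁, θ₂, κ₀, κ₁, κ∞) and variables
`p1, p2, q1, q2`. -/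
structure GarnierState where
  th1 : ℂ
  th2 : ℂ
  k0 : ℂ
  k1 : ℂ
  kinf : ℂ
  p1 : ℂ
  p2 : ℂ
  q1 : ℂ
  q2 : ℂ

namespace Garnier

noncomputable def gam (x : GarnierState) : ℂ :=
  -(x.th1 + x.th2 + x.k0 + x.k1 + x.kinf - 1) / 2

def f1 (x : GarnierState) : ℂ := x.p1 * x.q1 - x.th1

def f2 (x : GarnierState) : ℂ := x.p2 * x.q2 - x.th2

noncomputable def f3 (x : GarnierState) : ℂ := x.p1 * x.q1 + x.p2 * x.q2 + gam x

def f4 (t1 t2 : ℂ) (x : GarnierState) : ℂ :=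
  x.q1 * x.q2 - (x.q1 - t1) * (x.q2 - t2)

noncomputable def f5 (t1 t2 : ℂ) (x : GarnierState) : ℂ :=
  (f3 x * f4 t1 t2 x - x.k0 * t1 * t2) *
    (f3 x * f4 t1 t2 x + x.kinf * f4 t1 t2 x - x.k0 * t1 * t2)

/-- The Bäcklund transformation `T1` of the Garnier system in two variables, as a
step relation between states (including nonvanishing of all denominators
occurring in the step formulas). -/
noncomputable def T1Step (t1 t2 : ℂ) (x y : GarnierState) : Prop :=
  y.th1 = x.th1 + 1 ∧ y.th2 = x.th2 ∧ y.k0 = x.k0 ∧ y.k1 = 1 - x.k1 ∧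
  y.kinf = x.kinf ∧
  x.q1 ≠ 0 ∧ f1 x ≠ 0 ∧ t1 * f1 x - t2 * x.p2 * x.q1 ≠ 0 ∧ y.p1 ≠ 0 ∧
  y.p1 = (x.q1 * f3 x - t1 * f1 x) * (x.q1 * f3 x - t1 * f1 x + x.kinf * x.q1) /
    ((1 - t1) * t1 * x.q1 * f1 x) ∧
  y.p2 = t1 * (f1 x - x.p2 * x.q1) * y.p1 / (t1 * f1 x - t2 * x.p2 * x.q1) ∧
  y.q2 = (t2 * x.p2 * x.q1 - t1 * f1 x) * (t1 * x.q2 * f1 x - t2 * x.q1 * f2 x) /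
    ((t1 - t2) * t1 * y.p1 * x.q1 * f1 x) ∧
  y.q1 = (x.k0 * t2 * x.q1 - f1 x * f4 t1 t2 x) / (t2 * y.p1 * x.q1)
    - t1 * y.q2 / t2 + t1

/-- The Bäcklund transformation `T2` of the Garnier system in two variables, as a
step relation between states (including nonvanishing of all denominators
occurring in the step formulas). -/
noncomputable def T2Step (t1 t2 : ℂ) (x y : GarnierState) : Prop :=
  y.th1 = x.th1 ∧ y.th2 = x.th2 + 1 ∧ y.k0 = x.k0 ∧ y.k1 = 1 - x.k1 ∧
  y.kinf = x.kinf ∧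
  x.q2 ≠ 0 ∧ f2 x ≠ 0 ∧ t2 * f2 x - t1 * x.p1 * x.q2 ≠ 0 ∧ y.p2 ≠ 0 ∧
  y.p2 = (x.q2 * f3 x - t2 * f2 x) * (x.q2 * f3 x - t2 * f2 x + x.kinf * x.q2) /
    ((1 - t2) * t2 * x.q2 * f2 x) ∧
  y.p1 = t2 * (f2 x - x.p1 * x.q2) * y.p2 / (t2 * f2 x - t1 * x.p1 * x.q2) ∧
  y.q1 = (t1 * x.p1 * x.q2 - t2 * f2 x) * (t1 * x.q2 * f1 x - t2 * x.q1 * f2 x) /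
    ((t1 - t2) * t2 * y.p2 * x.q2 * f2 x) ∧
  y.q2 = (x.k0 * t1 * x.q2 - f2 x * f4 t1 t2 x) / (t1 * y.p2 * x.q2)
    - t2 * y.q1 / t1 + t2

/-- The Bäcklund transformation `T3` of the Garnier system in two variables, as a
step relation between states (including nonvanishing of all denominators
occurring in the step formulas). -/
noncomputable def T3Step (t1 t2 : ℂ) (x y : GarnierState) : Prop :=
  y.th1 = x.th1 ∧ y.th2 = x.th2 ∧ y.k0 = x.k0 + 1 ∧ y.k1 = 1 - x.k1 ∧
  y.kinf = x.kinf ∧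
  f4 t1 t2 x ≠ 0 ∧ x.k0 * t2 - x.p1 * f4 t1 t2 x ≠ 0 ∧
  x.k0 * t1 - x.p2 * f4 t1 t2 x ≠ 0 ∧ f5 t1 t2 x ≠ 0 ∧
  y.p1 = f5 t1 t2 x / (t1 * (x.k0 * t2 - x.p1 * f4 t1 t2 x) * f4 t1 t2 x) ∧
  y.p2 = f5 t1 t2 x / (t2 * (x.k0 * t1 - x.p2 * f4 t1 t2 x) * f4 t1 t2 x) ∧
  y.q1 = t1 * (x.k0 * t2 - x.p1 * f4 t1 t2 x) * (x.k0 * t2 * x.q1 - f1 x * f4 t1 t2 x) /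
    f5 t1 t2 x ∧
  y.q2 = t2 * (x.k0 * t1 - x.p2 * f4 t1 t2 x) * (x.k0 * t1 * x.q2 - f2 x * f4 t1 t2 x) /
    f5 t1 t2 x

end Garnier

private lemma sg_reduce (t1 t2 s1 w β α u0 u1 u2 u3 v0 v1 v2 v3 : ℂ)
    (hs1 : s1 ≠ 0) (hw : w ≠ 0)
    (hs1sq : s1 ^ 2 = t1) (hwsq : w ^ 2 = t1 - t2) (hα : α = w * β / s1)
    (h0 : u0 = -v0 / (s1 * w)) (h1 : u1 = -v1 / (s1 * w))
    (h2 : u2 = -v2 / (s1 * w)) (h3 : u3 = -v3 / (s1 * w))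
    (key : v3 * (t1 + v1) * (t1 - t2 + v2) = v0 * (t1 - t2 + v1) * (t1 + v2)) :
    u3 * (β - α * u1) * (α - β * u2) = u0 * (α - β * u1) * (β - α * u2) := by
  subst hα h0 h1 h2 h3
  have ht1 : t1 = s1 ^ 2 := hs1sq.symm
  subst ht1
  have ht2 : t2 = s1 ^ 2 - w ^ 2 := by linear_combination hwsq
  subst ht2
  have hD : s1 * w * (s1 * (s1 * w)) * (s1 * (s1 * w)) ≠ 0 := by
    simp [hs1, hw]
  field_simp
  linear_combination (-β ^ 2) * key

/-- Special solution of the lattice sine-Gordon equation (product form) from a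
(T2,T3) Garnier lattice. -/
theorem lsG_solution_from_Garnier_T2T3_lattice
    (t1 t2 : ℂ) (ht10 : t1 ≠ 0) (ht11 : t1 ≠ 1) (ht20 : t2 ≠ 0) (ht21 : t2 ≠ 1)
    (ht12 : t1 ≠ t2)
    (x : ℤ → ℤ → GarnierState)
    (hT2 : ∀ l m : ℤ, Garnier.T2Step t1 t2 (x l m) (x (l+1) m))
    (hT3 : ∀ l m : ℤ, Garnier.T3Step t1 t2 (x l m) (x l (m+1)))
    (hp1 : ∀ l m : ℤ, (x l m).p1 ≠ 0)
    (s1 w β : ℂ) (hs1 : s1 ≠ 0) (hw : w ≠ 0) (hβ : β ≠ 0)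
    (hs1sq : s1 ^ 2 = t1) (hwsq : w ^ 2 = t1 - t2)
    (α : ℂ) (hα : α = w * β / s1)
    (u : ℤ → ℤ → ℂ)
    (hu : ∀ l m : ℤ, u l m = -(t2 * (x l m).p2 / (x l m).p1 - t1) / (s1 * w)) :
    ∀ l m : ℤ,
      u (l+1) (m+1) * (β - α * u (l+1) m) * (α - β * u l (m+1)) =
        u l m * (α - β * u (l+1) m) * (β - α * u l (m+1))  := by
  intro l m
  have h2 := hT2 l m
  have h3a := hT3 l m
  have h3b := hT3 (l+1) m
  unfold Garnier.T2Step at h2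
  unfold Garnier.T3Step at h3a h3b
  obtain ⟨-, -, hk0b, -, -, hq2ne, hf2ne, hDne, hbp2ne, hbp2f, hbp1f, hbq1f, hbq2f⟩ := h2
  obtain ⟨-, -, -, -, -, hf4ne, hAne, hBne, hf5ne, hcp1f, hcp2f, -, -⟩ := h3a
  obtain ⟨-, -, -, -, -, hf4bne, hApne, hBpne, hf5bne, hdp1f, hdp2f, -, -⟩ := h3b
  have hap1 := hp1 l m
  have hbp1 := hp1 (l+1) m
  have hcp1 := hp1 l (m+1)
  have hdp1 := hp1 (l+1) (m+1)
  have hu00 := hu l m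
  have hu10 := hu (l+1) m
  have hu01 := hu l (m+1)
  have hu11 := hu (l+1) (m+1)
  set a := x l m with ha
  set b := x (l+1) m with hb
  set c := x l (m+1) with hc
  set d := x (l+1) (m+1) with hd
  rw [hk0b] at hApne hBpne hdp1f hdp2f
  set F2 := Garnier.f2 a with hF2
  set F4 := Garnier.f4 t1 t2 a with hF4
  set F4b := Garnier.f4 t1 t2 b with hF4b
  set F5 := Garnier.f5 t1 t2 a with hF5
  set F5b := Garnier.f5 t1 t2 b with hF5b
  -- basic consequences of the step formulas, in denominator-free form
  have hf4bq : F4b = t2 * b.q1 + t1 * b.q2 - t1 * t2 := by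
    rw [hF4b]; simp only [Garnier.f4]; ring
  have H1 : b.p2 * a.q2 * F4b = a.k0 * t1 * a.q2 - F2 * F4 := by
    rw [hf4bq, hbq2f]
    field_simp
    ring
  have hb1D : b.p1 * (t2 * F2 - t1 * a.p1 * a.q2) = t2 * (F2 - a.p1 * a.q2) * b.p2 := by
    rw [hbp1f]
    exact div_mul_cancel₀ _ hDne
  have hc1e : c.p1 * (t1 * (a.k0 * t2 - a.p1 * F4) * F4) = F5 := by
    rw [hcp1f]
    exact div_mul_cancel₀ _ (by exact mul_ne_zero (mul_ne_zero ht10 hAne) hf4ne)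
  have hc2e : c.p2 * (t2 * (a.k0 * t1 - a.p2 * F4) * F4) = F5 := by
    rw [hcp2f]
    exact div_mul_cancel₀ _ (by exact mul_ne_zero (mul_ne_zero ht20 hBne) hf4ne)
  have hd1e : d.p1 * (t1 * (a.k0 * t2 - b.p1 * F4b) * F4b) = F5b := by
    rw [hdp1f]
    exact div_mul_cancel₀ _ (by exact mul_ne_zero (mul_ne_zero ht10 hApne) hf4bne)
  have hd2e : d.p2 * (t2 * (a.k0 * t1 - b.p2 * F4b) * F4b) = F5b := by
    rw [hdp2f]
    exact div_mul_cancel₀ _ (by exact mul_ne_zero (mul_ne_zero ht20 hBpne) hf4bne)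
  -- the core polynomial identity
  have KEYP : ((((a.k0 * t2 - b.p1 * F4b) - (a.k0 * t1 - b.p2 * F4b)) * b.p2 * F4 * a.p1) *
        ((t2 * F2 - t1 * a.p1 * a.q2) * a.q2)) =
      (((b.p2 - b.p1) * (a.k0 * t2 - a.p1 * F4) * (a.k0 * t1 - b.p2 * F4b)) *
        ((t2 * F2 - t1 * a.p1 * a.q2) * a.q2)) := by
    linear_combination (b.p2 * a.k0 * t2 * (t2 - t1) * a.p1 * a.q2) * H1 +
      (a.q2 * ((a.k0 * t2 - a.p1 * F4) * (a.k0 * t1 - b.p2 * F4b) - F4b * b.p2 * F4 * a.p1)) * hb1D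
  have KEY3 : ((a.k0 * t2 - b.p1 * F4b) - (a.k0 * t1 - b.p2 * F4b)) * b.p2 * F4 * a.p1 =
      (b.p2 - b.p1) * (a.k0 * t2 - a.p1 * F4) * (a.k0 * t1 - b.p2 * F4b) :=
    mul_right_cancel₀ (mul_ne_zero hDne hq2ne) KEYP
  have hdd : (t2 * d.p2 - t1 * d.p1) *
        ((t1 * (a.k0 * t2 - b.p1 * F4b) * F4b) * (t2 * (a.k0 * t1 - b.p2 * F4b) * F4b)) =
      t1 * t2 * F4b * F5b * ((a.k0 * t2 - b.p1 * F4b) - (a.k0 * t1 - b.p2 * F4b)) := by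
    linear_combination (t2 * (t1 * (a.k0 * t2 - b.p1 * F4b) * F4b)) * hd2e -
      (t1 * (t2 * (a.k0 * t1 - b.p2 * F4b) * F4b)) * hd1e
  have hcc : (c.p2 - c.p1) *
        ((t1 * (a.k0 * t2 - a.p1 * F4) * F4) * (t2 * (a.k0 * t1 - a.p2 * F4) * F4)) =
      F4 ^ 2 * F5 * (t2 * a.p2 - t1 * a.p1) := by
    linear_combination (t1 * (a.k0 * t2 - a.p1 * F4) * F4) * hc2e -
      (t2 * (a.k0 * t1 - a.p2 * F4) * F4) * hc1e
  have hMne : ((t1 * (a.k0 * t2 - b.p1 * F4b) * F4b) * (t2 * (a.k0 * t1 - b.p2 * F4b) * F4b)) *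
      ((t1 * (a.k0 * t2 - a.p1 * F4) * F4) * (t2 * (a.k0 * t1 - a.p2 * F4) * F4)) ≠ 0 := by
    apply mul_ne_zero <;> apply mul_ne_zero <;>
      first
        | exact mul_ne_zero (mul_ne_zero ht10 hApne) hf4bne
        | exact mul_ne_zero (mul_ne_zero ht20 hBpne) hf4bne
        | exact mul_ne_zero (mul_ne_zero ht10 hAne) hf4ne
        | exact mul_ne_zero (mul_ne_zero ht20 hBne) hf4ne
  have hM : ((t2 * d.p2 - t1 * d.p1) * b.p2 * (c.p2 - c.p1) * a.p1) *
        (((t1 * (a.k0 * t2 - b.p1 * F4b) * F4b) * (t2 * (a.k0 * t1 - b.p2 * F4b) * F4b)) *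
          ((t1 * (a.k0 * t2 - a.p1 * F4) * F4) * (t2 * (a.k0 * t1 - a.p2 * F4) * F4))) =
      ((t2 * a.p2 - t1 * a.p1) * (b.p2 - b.p1) * c.p2 * d.p1) *
        (((t1 * (a.k0 * t2 - b.p1 * F4b) * F4b) * (t2 * (a.k0 * t1 - b.p2 * F4b) * F4b)) *
          ((t1 * (a.k0 * t2 - a.p1 * F4) * F4) * (t2 * (a.k0 * t1 - a.p2 * F4) * F4))) := by
    linear_combination
      ((c.p2 - c.p1) * ((t1 * (a.k0 * t2 - a.p1 * F4) * F4) * (t2 * (a.k0 * t1 - a.p2 * F4) * F4)) *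
        (b.p2 * a.p1)) * hdd +
      (t1 * t2 * F4b * F5b * ((a.k0 * t2 - b.p1 * F4b) - (a.k0 * t1 - b.p2 * F4b)) *
        (b.p2 * a.p1)) * hcc +
      (-((t2 * a.p2 - t1 * a.p1) * (b.p2 - b.p1) * (t1 * (a.k0 * t2 - a.p1 * F4) * F4) *
        (t2 * (a.k0 * t1 - b.p2 * F4b) * F4b)) * (d.p1 * (t1 * (a.k0 * t2 - b.p1 * F4b) * F4b))) * hc2e +
      (-((t2 * a.p2 - t1 * a.p1) * (b.p2 - b.p1) * (t1 * (a.k0 * t2 - a.p1 * F4) * F4) *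
        (t2 * (a.k0 * t1 - b.p2 * F4b) * F4b)) * F5) * hd1e +
      (t1 * t2 * F4 * F4b * F5 * F5b * (t2 * a.p2 - t1 * a.p1)) * KEY3
  have KEY : (t2 * d.p2 - t1 * d.p1) * b.p2 * (c.p2 - c.p1) * a.p1 =
      (t2 * a.p2 - t1 * a.p1) * (b.p2 - b.p1) * c.p2 * d.p1 :=
    mul_right_cancel₀ hMne hM
  have hkey : (t2 * d.p2 / d.p1 - t1) * (t1 + (t2 * b.p2 / b.p1 - t1)) *
        (t1 - t2 + (t2 * c.p2 / c.p1 - t1)) =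
      (t2 * a.p2 / a.p1 - t1) * (t1 - t2 + (t2 * b.p2 / b.p1 - t1)) *
        (t1 + (t2 * c.p2 / c.p1 - t1)) := by
    field_simp
    linear_combination (t2 ^ 2) * KEY
  exact sg_reduce t1 t2 s1 w β α _ _ _ _ _ _ _ _ hs1 hw hs1sq hwsq hα hu00 hu10 hu01 hu11 hkey
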